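/- arXiv:1303.2467 — 9 statements merged into one kernel-verified Lean document; each statement's English description precedes it below -/
import Mathlib

section
/- Λ-simulations are stable under relational composition: if S is a Λ-simulation from C to D and S' is a Λ-simulation from D to E, then the relational composite S' ∘ S is a Λ-simulation from C to E. -/
open CategoryTheory

universe u

/-- A monotone predicate lifting for a `Set`-endofunctor `T`:
a natural transformation `Q → Q ∘ T^op` whose components are monotone. -/
structure PredLifting (T : Type u ⥤ Type u) where
  app : ∀ X : Type u, Set X → Set (T.obj X)
  natural : ∀ {X Y : Type u} (f : X → Y) (A : Set Y),
    app X (f ⁻¹' A) = T.map (TypeCat.ofHom f) ⁻¹' app Y A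
  mono : ∀ (X : Type u) ⦃A B : Set X⦄, A ⊆ B → app X A ⊆ app X B

/-- Relational image `S[A]`. -/
def RelImage {X Y : Type u} (S : X → Y → Prop) (A : Set X) : Set Y :=
  {y | ∃ x ∈ A, S x y}

/-- `S` is a `Λ`-simulation from the `T`-coalgebra `(X,ξ)` to `(Y,ζ)`. -/
def IsSim {T : Type u ⥤ Type u} (Λ : Set (PredLifting T))
    {X Y : Type u} (ξ : X → T.obj X) (ζ : Y → T.obj Y)
    (S : X → Y → Prop) : Prop :=
  ∀ x y, S x y → ∀ L ∈ Λ, ∀ A : Set X,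
    ξ x ∈ L.app X A → ζ y ∈ L.app Y (RelImage S A)

theorem lambda_sim_comp {T : Type u ⥤ Type u} (Λ : Set (PredLifting T))
    {X Y Z : Type u} (ξ : X → T.obj X) (ζ : Y → T.obj Y) (χ : Z → T.obj Z)
    (S : X → Y → Prop) (S' : Y → Z → Prop)
    (hS : IsSim Λ ξ ζ S) (hS' : IsSim Λ ζ χ S') :
    IsSim Λ ξ χ (fun x z => ∃ y, S x y ∧ S' y z) := by
  rintro x z ⟨y, hxy, hyz⟩ L hL A hA
  have h1 := hS x y hxy L hL A hA
  have h2 := hS' y z hyz L hL _ h1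
  refine L.mono Z ?_ h2
  rintro w ⟨v, ⟨u, hu, huv⟩, hvw⟩
  exact ⟨u, hu, v, huv, hvw⟩
end

section
/- A function f : X → Y between the carriers of T-coalgebras (X,ξ) and (Y,ζ) is a Λ-homomorphism (i.e., its graph is a Λ-simulation) if and only if for all x ∈ X, Tf(ξ(x)) ≤_Λ ζ(f(x)), where s ≤_Λ t means that for all ♥ ∈ Λ and A ⊆ Y, s ∈ ⟦♥⟧_Y A implies t ∈ ⟦♥⟧_Y A. -/
open CategoryTheory

universe u

theorem lambda_hom_iff_le {T : Type u ⥤ Type u} (Λ : Set (PredLifting T))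
    {X Y : Type u} (ξ : X → T.obj X) (ζ : Y → T.obj Y) (f : X → Y) :
    IsSim Λ ξ ζ (fun x y => f x = y) ↔
      ∀ x : X, ∀ L ∈ Λ, ∀ A : Set Y,
        T.map (TypeCat.ofHom f) (ξ x) ∈ L.app Y A → ζ (f x) ∈ L.app Y A := by
  constructor
  · intro hsim x L hL A hA
    have h1 : ξ x ∈ L.app X (f ⁻¹' A) := by
      rw [L.natural f A]; exact hA
    have h2 := hsim x (f x) rfl L hL (f ⁻¹' A) h1
    refine L.mono Y ?_ h2
    rintro y ⟨x', hx', rfl⟩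
    exact hx'
  · intro h x y hxy L hL A hA
    subst hxy
    apply h x L hL
    have hsub : A ⊆ f ⁻¹' RelImage (fun x y => f x = y) A :=
      fun x' hx' => ⟨x', hx', rfl⟩
    have h1 : ξ x ∈ L.app X (f ⁻¹' RelImage (fun x y => f x = y) A) :=
      L.mono X hsub hA
    rwa [L.natural] at h1
end

section
/- If S is a Λ-simulation between T-coalgebras C and D and x S y, then for every positive Λ-formula φ, x ⊨ φ implies y ⊨ φ. -/
open CategoryTheory

universe u

/-- Positive `Λ`-formulas. -/
inductive PosForm {T : Type u ⥤ Type u} (Λ : Set (PredLifting T)) : Type (u+1) where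
  | top : PosForm Λ
  | bot : PosForm Λ
  | and : PosForm Λ → PosForm Λ → PosForm Λ
  | or : PosForm Λ → PosForm Λ → PosForm Λ
  | mod : Λ → PosForm Λ → PosForm Λ

/-- Satisfaction of positive formulas in a `T`-coalgebra. -/
def PosSat {T : Type u ⥤ Type u} {Λ : Set (PredLifting T)} {X : Type u}
    (ξ : X → T.obj X) : PosForm Λ → X → Prop
  | .top => fun _ => True
  | .bot => fun _ => False
  | .and φ ψ => fun x => PosSat ξ φ x ∧ PosSat ξ ψ x
  | .or φ ψ => fun x => PosSat ξ φ x ∨ PosSat ξ ψ x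
  | .mod L φ => fun x => ξ x ∈ (L : PredLifting T).app X {z | PosSat ξ φ z}

/-- Rank (modal nesting depth) of a positive formula. -/
def PosRank {T : Type u ⥤ Type u} {Λ : Set (PredLifting T)} : PosForm Λ → ℕ
  | .top => 0
  | .bot => 0
  | .and φ ψ => max (PosRank φ) (PosRank ψ)
  | .or φ ψ => max (PosRank φ) (PosRank ψ)
  | .mod _ φ => PosRank φ + 1

theorem lambda_sim_preserves_positive {T : Type u ⥤ Type u}
    {Λ : Set (PredLifting T)} {X Y : Type u}
    (ξ : X → T.obj X) (ζ : Y → T.obj Y) (S : X → Y → Prop)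
    (hS : IsSim Λ ξ ζ S) {x : X} {y : Y} (hxy : S x y)
    (φ : PosForm Λ) (hx : PosSat ξ φ x) : PosSat ζ φ y := by
  induction φ generalizing x y with
  | top => trivial
  | bot => exact hx
  | and φ ψ ihφ ihψ => exact ⟨ihφ hxy hx.1, ihψ hxy hx.2⟩
  | or φ ψ ihφ ihψ => exact hx.imp (ihφ hxy) (ihψ hxy)
  | mod L φ ih =>
    have h := hS x y hxy L L.2 _ hx
    exact (L : PredLifting T).mono Y
      (fun w hw => by obtain ⟨z, hz, hzw⟩ := hw; exact ih hzw hz) h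
end

section
/- If S is a Λ-n-simulation between T-coalgebras C and D and x S y, then for every positive Λ-formula φ of rank at most n, x ⊨ φ implies y ⊨ φ. -/
open CategoryTheory

universe u

def IsNSim {T : Type u ⥤ Type u} (Λ : Set (PredLifting T))
    {X Y : Type u} (ξ : X → T.obj X) (ζ : Y → T.obj Y) :
    ℕ → (X → Y → Prop) → Prop
  | 0, _ => True
  | n + 1, S => ∃ S' : X → Y → Prop, IsNSim Λ ξ ζ n S' ∧
      (∀ x y, S x y → S' x y) ∧
      ∀ x y, S x y → ∀ L ∈ Λ, ∀ A : Set X,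
        ξ x ∈ L.app X A → ζ y ∈ L.app Y (RelImage S' A)

theorem lambda_n_sim_preserves_positive {T : Type u ⥤ Type u}
    {Λ : Set (PredLifting T)} {X Y : Type u}
    (ξ : X → T.obj X) (ζ : Y → T.obj Y) (S : X → Y → Prop) (n : ℕ)
    (hS : IsNSim Λ ξ ζ n S) {x : X} {y : Y} (hxy : S x y)
    (φ : PosForm Λ) (hrank : PosRank φ ≤ n)
    (hx : PosSat ξ φ x) : PosSat ζ φ y := by
  induction φ generalizing n S x y with
  | top => trivial
  | bot => exact hx
  | and φ ψ ihφ ihψ =>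
    simp only [PosRank, max_le_iff] at hrank
    exact ⟨ihφ S n hS hxy hrank.1 hx.1, ihψ S n hS hxy hrank.2 hx.2⟩
  | or φ ψ ihφ ihψ =>
    simp only [PosRank, max_le_iff] at hrank
    exact hx.elim (fun h => Or.inl (ihφ S n hS hxy hrank.1 h))
      (fun h => Or.inr (ihψ S n hS hxy hrank.2 h))
  | mod L φ ih =>
    obtain ⟨k, rfl⟩ : ∃ k, n = k + 1 := by
      cases n with
      | zero => exact absurd hrank (by simp [PosRank])
      | succ k => exact ⟨k, rfl⟩
    obtain ⟨S', hS', _, hstep⟩ := hS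
    have h := hstep x y hxy L L.2 _ hx
    refine (L : PredLifting T).mono Y ?_ h
    rintro z ⟨w, hw, hS'wz⟩
    exact ih S' k hS' hS'wz (Nat.succ_le_succ_iff.mp hrank) hw
end

section
/- If C and D are T-coalgebras and f : C → D is a coalgebra morphism, then the graph of f is a Λ-bisimulation (i.e., both the graph and its converse are Λ-simulations). -/
open CategoryTheory

universe u

/-- `f` is a coalgebra morphism. -/
def IsCoalgMor {T : Type u ⥤ Type u} {X Y : Type u}
    (ξ : X → T.obj X) (ζ : Y → T.obj Y) (f : X → Y) : Prop :=
  ∀ x, ζ (f x) = T.map (TypeCat.ofHom f) (ξ x)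

theorem graph_of_morphism_is_bisimulation {T : Type u ⥤ Type u}
    (Λ : Set (PredLifting T)) {X Y : Type u}
    (ξ : X → T.obj X) (ζ : Y → T.obj Y) (f : X → Y)
    (hf : IsCoalgMor ξ ζ f) :
    IsSim Λ ξ ζ (fun x y => f x = y) ∧
      IsSim Λ ζ ξ (fun y x => f x = y) := by
  constructor
  · intro x y hxy L hL A hA
    subst hxy
    have h1 : A ⊆ f ⁻¹' (RelImage (fun x y => f x = y) A) := by
      intro a ha
      exact ⟨a, ha, rfl⟩
    have h2 := L.mono X h1 hA
    rw [L.natural] at h2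
    rw [hf x]
    exact h2
  · intro y x hxy L hL A hA
    subst hxy
    rw [hf x] at hA
    have h2 : ξ x ∈ L.app X (f ⁻¹' A) := by
      rw [L.natural]; exact hA
    refine L.mono X ?_ h2
    intro a ha
    exact ⟨f a, ha, rfl⟩
end

section
/- For any T-coalgebras C = (X,ξ) and D = (Y,ζ) and any n, the n-step equivalence relation ≈_n = {(x,y) | ξ_n(x) = ζ_n(y)} ⊆ X × Y is a Λ-n-bisimulation. -/
open CategoryTheory

universe u

/-- The terminal sequence of `T`. -/
def TSeq (T : Type u ⥤ Type u) : ℕ → Type u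
  | 0 => PUnit
  | n + 1 => T.obj (TSeq T n)

/-- The canonical cone from a coalgebra into the terminal sequence. -/
def seqMap (T : Type u ⥤ Type u) {X : Type u} (ξ : X → T.obj X) :
    ∀ n : ℕ, X → TSeq T n
  | 0 => fun _ => PUnit.unit
  | n + 1 => fun x => T.map (TypeCat.ofHom (seqMap T ξ n)) (ξ x)

def proj (T : Type u ⥤ Type u) : ∀ n : ℕ, TSeq T (n + 1) → TSeq T n
  | 0 => fun _ => PUnit.unit
  | n + 1 => T.map (TypeCat.ofHom (proj T n))

lemma proj_seqMap (T : Type u ⥤ Type u) {X : Type u} (ξ : X → T.obj X) :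
    ∀ n x, proj T n (seqMap T ξ (n + 1) x) = seqMap T ξ n x
  | 0, _ => rfl
  | n + 1, x => by
    show T.map (TypeCat.ofHom (proj T n)) (T.map (TypeCat.ofHom (seqMap T ξ (n + 1))) (ξ x)) = _
    rw [← FunctorToTypes.map_comp_apply]
    show T.map (TypeCat.ofHom (fun z => proj T n (seqMap T ξ (n + 1) z))) (ξ x) = _
    have : (fun z => proj T n (seqMap T ξ (n + 1) z)) = seqMap T ξ n :=
      funext fun z => proj_seqMap T ξ n z
    rw [this]; rfl

lemma key {T : Type u ⥤ Type u} {X Y : Type u}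
    (ξ : X → T.obj X) (ζ : Y → T.obj Y) (L : PredLifting T) (n : ℕ)
    {S : X → Y → Prop}
    (hS : ∀ x y, seqMap T ξ n x = seqMap T ζ n y → S x y)
    {x y} (h : seqMap T ξ (n + 1) x = seqMap T ζ (n + 1) y)
    (A : Set X) (hx : ξ x ∈ L.app X A) :
    ζ y ∈ L.app Y (RelImage S A) := by
  set f := seqMap T ξ n
  set g := seqMap T ζ n
  have h1 : ξ x ∈ L.app X (f ⁻¹' (f '' A)) :=
    L.mono X (Set.subset_preimage_image f A) hx
  rw [L.natural] at h1
  have he : T.map (TypeCat.ofHom f) (ξ x) = T.map (TypeCat.ofHom g) (ζ y) := h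
  have h2 : T.map (TypeCat.ofHom g) (ζ y) ∈ L.app (TSeq T n) (f '' A) := he ▸ h1
  have h3 : ζ y ∈ L.app Y (g ⁻¹' (f '' A)) := by rw [L.natural]; exact h2
  refine L.mono Y ?_ h3
  rintro y' ⟨x', hx', hfg⟩
  exact ⟨x', hx', hS x' y' hfg⟩

theorem n_step_equiv_is_n_bisim {T : Type u ⥤ Type u}
    (Λ : Set (PredLifting T)) {X Y : Type u}
    (ξ : X → T.obj X) (ζ : Y → T.obj Y) (n : ℕ) :
    IsNSim Λ ξ ζ n (fun x y => seqMap T ξ n x = seqMap T ζ n y) ∧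
      IsNSim Λ ζ ξ n (fun y x => seqMap T ξ n x = seqMap T ζ n y) := by
  induction n with
  | zero => exact ⟨trivial, trivial⟩
  | succ n ih =>
    have step : ∀ x y, seqMap T ξ (n + 1) x = seqMap T ζ (n + 1) y →
        seqMap T ξ n x = seqMap T ζ n y := fun x y h => by
      have := congrArg (proj T n) h
      rwa [proj_seqMap, proj_seqMap] at this
    constructor
    · exact ⟨_, ih.1, step, fun x y h L _ A hx =>
        key ξ ζ L n (fun _ _ hh => hh) h A hx⟩
    · exact ⟨_, ih.2, fun y x h => step x y h, fun y x h L _ A hy =>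
        key ζ ξ L n (fun _ _ hh => hh.symm) h.symm A hy⟩
end

section
/- The behavioural equivalence relation ≈ between two T-coalgebras C and D is a Λ-bisimulation, where x ≈ y iff there exist a T-coalgebra E and coalgebra morphisms f : C → E, g : D → E with f(x) = g(y). -/
open CategoryTheory

universe u

/-- Behavioural equivalence between states of two coalgebras. -/
def BhvEquiv {T : Type u ⥤ Type u} {X Y : Type u}
    (ξ : X → T.obj X) (ζ : Y → T.obj Y) (x : X) (y : Y) : Prop :=
  ∃ (Z : Type u) (χ : Z → T.obj Z) (f : X → Z) (g : Y → Z),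
    IsCoalgMor ξ χ f ∧ IsCoalgMor ζ χ g ∧ f x = g y

lemma key_step {T : Type u ⥤ Type u} (L : PredLifting T)
    {X Y Z : Type u} (ξ : X → T.obj X) (ζ : Y → T.obj Y) (χ : Z → T.obj Z)
    (f : X → Z) (g : Y → Z) (hf : IsCoalgMor ξ χ f) (hg : IsCoalgMor ζ χ g)
    {x : X} {y : Y} (hxy : f x = g y) (A : Set X) (h : ξ x ∈ L.app X A) :
    ζ y ∈ L.app Y (g ⁻¹' (f '' A)) := by
  have h1 : ξ x ∈ L.app X (f ⁻¹' (f '' A)) :=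
    L.mono X (Set.subset_preimage_image f A) h
  rw [L.natural] at h1
  have h2 : χ (f x) ∈ L.app Z (f '' A) := by
    rw [hf x]; exact h1
  rw [hxy, hg y] at h2
  rw [L.natural]
  exact h2

theorem bhv_equiv_is_bisimulation {T : Type u ⥤ Type u}
    (Λ : Set (PredLifting T)) {X Y : Type u}
    (ξ : X → T.obj X) (ζ : Y → T.obj Y) :
    IsSim Λ ξ ζ (BhvEquiv ξ ζ) ∧
      IsSim Λ ζ ξ (fun y x => BhvEquiv ξ ζ x y) := by
  constructor
  · rintro x y ⟨Z, χ, f, g, hf, hg, hxy⟩ L hL A hA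
    refine L.mono Y ?_ (key_step L ξ ζ χ f g hf hg hxy A hA)
    rintro y' ⟨x', hx', hfx'⟩
    exact ⟨x', hx', Z, χ, f, g, hf, hg, hfx'⟩
  · rintro y x ⟨Z, χ, f, g, hf, hg, hxy⟩ L hL A hA
    refine L.mono X ?_ (key_step L ζ ξ χ g f hg hf hxy.symm A hA)
    rintro x' ⟨y', hy', hgy'⟩
    exact ⟨y', hy', Z, χ, f, g, hf, hg, hgy'.symm⟩
end

section
/- A relation S ⊆ X × Y between T-coalgebras is a Λ-bisimulation up to difunctionality if and only if its difunctional closure is a Λ-bisimulation. -/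
open CategoryTheory

universe u

/-- The difunctional closure of a relation, via zig-zag chains. -/
def DifClosure {X Y : Type u} (S : X → Y → Prop) (x : X) (y : Y) : Prop :=
  ∃ (n : ℕ) (xs : Fin (n + 1) → X) (ys : Fin (n + 1) → Y),
    xs 0 = x ∧ ys (Fin.last n) = y ∧
    (∀ i, S (xs i) (ys i)) ∧
    (∀ i : Fin n, S (xs i.succ) (ys i.castSucc))

/-- `S` is a `Λ`-bisimulation up to difunctionality. -/
def IsBisimUpToDif {T : Type u ⥤ Type u} (Λ : Set (PredLifting T))
    {X Y : Type u} (ξ : X → T.obj X) (ζ : Y → T.obj Y)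
    (S : X → Y → Prop) : Prop :=
  (∀ x y, S x y → ∀ L ∈ Λ, ∀ A : Set X,
      ξ x ∈ L.app X A → ζ y ∈ L.app Y (RelImage (DifClosure S) A)) ∧
  (∀ x y, S x y → ∀ B : Set Y,
      ∀ L ∈ Λ, ζ y ∈ L.app Y B →
        ξ x ∈ L.app X (RelImage (fun y' x' => DifClosure S x' y') B))

/-- Inductive presentation of the difunctional closure: extend a chain on the right. -/
inductive Chain {X Y : Type u} (S : X → Y → Prop) : X → Y → Prop
  | base {x : X} {y : Y} : S x y → Chain S x y
  | step {x : X} {y : Y} {x' : X} {y' : Y} :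
      Chain S x y → S x' y → S x' y' → Chain S x y'

lemma difClosure_of_chain {X Y : Type u} {S : X → Y → Prop} {x : X} {y : Y}
    (h : Chain S x y) : DifClosure S x y := by
  induction h with
  | @base y h =>
      exact ⟨0, fun _ => x, fun _ => y, rfl, rfl, fun _ => h, fun i => i.elim0⟩
  | @step y x' y' hc hS hS' ih =>
      obtain ⟨n, xs, ys, h0, hl, h1, h2⟩ := ih
      refine ⟨n + 1, Fin.snoc xs x', Fin.snoc ys y', ?_, ?_, ?_, ?_⟩
      · rw [← Fin.castSucc_zero, Fin.snoc_castSucc]; exact h0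
      · simp [Fin.snoc_last]
      · intro i
        refine Fin.lastCases ?_ ?_ i
        · simpa [Fin.snoc_last] using hS'
        · intro j; simpa [Fin.snoc_castSucc] using h1 j
      · intro i
        refine Fin.lastCases ?_ ?_ i
        · have : (Fin.last n).succ = Fin.last (n + 1) := rfl
          rw [this, Fin.snoc_last, Fin.snoc_castSucc, hl]
          exact hS
        · intro j
          rw [Fin.succ_castSucc, Fin.snoc_castSucc, Fin.snoc_castSucc]; exact h2 j

lemma chain_of_difClosure {X Y : Type u} {S : X → Y → Prop} {x : X} {y : Y}
    (h : DifClosure S x y) : Chain S x y := by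
  obtain ⟨n, xs, ys, h0, hl, h1, h2⟩ := h
  subst h0; subst hl
  induction n with
  | zero => exact Chain.base (h1 0)
  | succ n ih =>
      have hmain : Chain S (xs (Fin.castSucc 0)) (ys (Fin.castSucc (Fin.last n))) := by
        refine ih (fun i => xs i.castSucc) (fun i => ys i.castSucc)
          (fun i => h1 i.castSucc) ?_
        intro i
        have := h2 i.castSucc
        rwa [Fin.succ_castSucc] at this
      have h0' : (Fin.castSucc (0 : Fin (n + 1))) = (0 : Fin (n + 2)) := by
        simp
      rw [h0'] at hmain
      have hzig : S (xs (Fin.last (n + 1))) (ys (Fin.castSucc (Fin.last n))) := by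
        have := h2 (Fin.last n)
        have hsucc : (Fin.last n).succ = Fin.last (n + 1) := rfl
        rwa [hsucc] at this
      exact Chain.step hmain hzig (h1 (Fin.last (n + 1)))

lemma difClosure_base {X Y : Type u} {S : X → Y → Prop} {x : X} {y : Y}
    (h : S x y) : DifClosure S x y :=
  difClosure_of_chain (Chain.base h)

lemma chain_difunctional {X Y : Type u} {S : X → Y → Prop} :
    ∀ {x' : X} {y : Y}, Chain S x' y → ∀ {x : X} {y' : Y},
      Chain S x y → Chain S x' y' → Chain S x y' := by
  -- first auxiliary: B : Chain x y → Chain x' y → S x' y' → Chain x y'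
  have B : ∀ {x' : X} {y : Y}, Chain S x' y → ∀ {x : X} {y' : Y},
      Chain S x y → S x' y' → Chain S x y' := by
    intro x' y h
    induction h with
    | @base y h =>
        intro x y' hxy hS'
        exact Chain.step hxy h hS'
    | @step y0 x2 y hc h1 h2 ih =>
        intro x y' hxy hS'
        exact ih (Chain.step hxy h2 h1) hS'
  intro x' y hx'y x y' hxy hx'y'
  induction hx'y' with
  | @base yb hb =>
      exact B hx'y hxy hb
  | @step y'' x2 y3 hc h1 h2 ih =>
      exact Chain.step ih h1 h2

lemma difClosure_difunctional {X Y : Type u} {S : X → Y → Prop}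
    {x x' : X} {y y' : Y} (h1 : DifClosure S x y) (h2 : DifClosure S x' y)
    (h3 : DifClosure S x' y') : DifClosure S x y' :=
  difClosure_of_chain
    (chain_difunctional (chain_of_difClosure h2) (chain_of_difClosure h1)
      (chain_of_difClosure h3))

theorem bisim_up_to_dif_iff_closure_bisim {T : Type u ⥤ Type u}
    (Λ : Set (PredLifting T)) {X Y : Type u}
    (ξ : X → T.obj X) (ζ : Y → T.obj Y) (S : X → Y → Prop) :
    IsBisimUpToDif Λ ξ ζ S ↔
      (IsSim Λ ξ ζ (DifClosure S) ∧
        IsSim Λ ζ ξ (fun y x => DifClosure S x y)) := by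
  set D := DifClosure S with hD
  set R : Y → X → Prop := fun y x => D x y with hR
  have sub1 : ∀ A : Set X, RelImage D (RelImage R (RelImage D A)) ⊆ RelImage D A := by
    rintro A y'' ⟨x'', ⟨y3, ⟨a, haA, haD⟩, hx''⟩, hy''⟩
    exact ⟨a, haA, difClosure_difunctional haD hx'' hy''⟩
  have sub2 : ∀ B : Set Y, RelImage R (RelImage D (RelImage R B)) ⊆ RelImage R B := by
    rintro B x'' ⟨y3, ⟨x3, ⟨y4, hy4B, hx3⟩, hx3'⟩, hx''⟩
    exact ⟨y4, hy4B, difClosure_difunctional hx'' hx3' hx3⟩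
  constructor
  · rintro ⟨H1, H2⟩
    constructor
    · intro x y hxy L hL A hA
      have hc := chain_of_difClosure hxy
      clear hxy
      revert hA
      induction hc with
      | @base y h =>
          intro hA
          exact H1 x y h L hL A hA
      | @step y0 x1 y1 hc hS hS' ih =>
          intro hA
          have h1 : ζ y0 ∈ L.app Y (RelImage D A) := ih hA
          have h2 : ξ x1 ∈ L.app X (RelImage R (RelImage D A)) :=
            H2 x1 y0 hS (RelImage D A) L hL h1
          have h3 : ζ y1 ∈ L.app Y (RelImage D (RelImage R (RelImage D A))) :=
            H1 x1 y1 hS' L hL _ h2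
          exact L.mono Y (sub1 A) h3
    · intro y x hxy L hL B hB
      have hc := chain_of_difClosure hxy
      clear hxy
      revert hB; revert B
      induction hc with
      | @base y h =>
          intro B hB
          exact H2 x y h B L hL hB
      | @step y0 x1 y1 hc hS hS' ih =>
          intro B hB
          have h1 : ξ x1 ∈ L.app X (RelImage R B) :=
            H2 x1 y1 hS' B L hL hB
          have h2 : ζ y0 ∈ L.app Y (RelImage D (RelImage R B)) :=
            H1 x1 y0 hS L hL _ h1
          have h3 : ξ x ∈ L.app X (RelImage R (RelImage D (RelImage R B))) :=
            ih _ h2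
          exact L.mono X (sub2 B) h3
  · rintro ⟨hs1, hs2⟩
    constructor
    · intro x y hS L hL A hA
      exact hs1 x y (difClosure_base hS) L hL A hA
    · intro x y hS B L hL hB
      exact hs2 y x (difClosure_base hS) L hL B hB
end

section
/- Every T-bisimulation between T-coalgebras (X,ξ) and (Y,ζ) is a Λ-bisimulation, for any set Λ of monotone predicate liftings for T. -/
open CategoryTheory

universe u

/-- `S` is a `T`-bisimulation: it carries a coalgebra structure making
both projections coalgebra morphisms. -/
def IsTBisim (T : Type u ⥤ Type u) {X Y : Type u}
    (ξ : X → T.obj X) (ζ : Y → T.obj Y) (S : X → Y → Prop) : Prop :=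
  ∃ ρ : {p : X × Y // S p.1 p.2} → T.obj {p : X × Y // S p.1 p.2},
    (∀ s, T.map (TypeCat.ofHom (fun q : {p : X × Y // S p.1 p.2} => q.1.1)) (ρ s) = ξ s.1.1) ∧
    (∀ s, T.map (TypeCat.ofHom (fun q : {p : X × Y // S p.1 p.2} => q.1.2)) (ρ s) = ζ s.1.2)

theorem t_bisim_is_lambda_bisim {T : Type u ⥤ Type u}
    (Λ : Set (PredLifting T)) {X Y : Type u}
    (ξ : X → T.obj X) (ζ : Y → T.obj Y) (S : X → Y → Prop)
    (h : IsTBisim T ξ ζ S) :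
    IsSim Λ ξ ζ S ∧ IsSim Λ ζ ξ (fun y x => S x y) := by
  obtain ⟨ρ, h1, h2⟩ := h
  constructor
  · intro x y hxy L hL A hx
    set p1 : {p : X × Y // S p.1 p.2} → X := fun q => q.1.1
    set p2 : {p : X × Y // S p.1 p.2} → Y := fun q => q.1.2
    have hmem : ρ ⟨(x, y), hxy⟩ ∈ L.app _ (p1 ⁻¹' A) := by
      rw [L.natural p1 A]
      simp only [Set.mem_preimage, h1 ⟨(x, y), hxy⟩]
      exact hx
    have hsub : p1 ⁻¹' A ⊆ p2 ⁻¹' (RelImage S A) := by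
      intro q hq
      exact ⟨q.1.1, hq, q.2⟩
    have := L.mono _ hsub hmem
    rw [L.natural p2 (RelImage S A)] at this
    have h2' := h2 ⟨(x, y), hxy⟩
    simpa [h2'] using this
  · intro y x hxy L hL A hy
    set p1 : {p : X × Y // S p.1 p.2} → X := fun q => q.1.1
    set p2 : {p : X × Y // S p.1 p.2} → Y := fun q => q.1.2
    have hmem : ρ ⟨(x, y), hxy⟩ ∈ L.app _ (p2 ⁻¹' A) := by
      rw [L.natural p2 A]
      simp only [Set.mem_preimage, h2 ⟨(x, y), hxy⟩]
      exact hy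
    have hsub : p2 ⁻¹' A ⊆ p1 ⁻¹' (RelImage (fun y x => S x y) A) := by
      intro q hq
      exact ⟨q.1.2, hq, q.2⟩
    have := L.mono _ hsub hmem
    rw [L.natural p1 (RelImage (fun y x => S x y) A)] at this
    have h1' := h1 ⟨(x, y), hxy⟩
    simpa [h1'] using this
end
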